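/- arXiv:1012.5631 — 2 statements merged into one kernel-verified Lean document; each statement's English description precedes it below -/
import Mathlib

section
/- Let p be a prime, S a group, and R a normal subgroup of S with R ≤ S^{(2)}. Assume R^{(2,S)} = R ∩ S^{(3)}. Then every group homomorphism φ : R → ℤ/pℤ whose kernel contains R^{(2,S)} is the restriction to R of a group homomorphism ψ : S^{(2)} → ℤ/pℤ whose kernel contains S^{(3)}. -/
open scoped commutatorElement

/-- The subgroup generated by all `p`-th powers of elements of `H` together with all
commutators `⁅h, g⁆ = h * g * h⁻¹ * g⁻¹` with `h ∈ H` and `g` in the ambient group. -/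
def pStep (p : ℕ) {G : Type*} [Group G] (H : Subgroup G) : Subgroup G :=
  Subgroup.closure ({x : G | ∃ h ∈ H, x = h ^ p} ∪ {x : G | ∃ h ∈ H, ∃ g : G, x = ⁅h, g⁆})

/-- `pSeries p H n` is the filtration `H^{(n,G)}`: `H^{(1,G)} = H` and
`H^{(n+1,G)} = (H^{(n,G)})^p [H^{(n,G)}, G]`.  Taking `H = ⊤` gives the lower
`p`-central series `G^{(n)}` of `G` (with `G^{(1)} = G`). -/
def pSeries (p : ℕ) {G : Type*} [Group G] (H : Subgroup G) : ℕ → Subgroup G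
  | 0 => H
  | 1 => H
  | (n + 2) => pStep p (pSeries p H (n + 1))

theorem pStep_normal (p : ℕ) {G : Type*} [Group G] (H : Subgroup G) (hH : H.Normal) :
    (pStep p H).Normal := by
  constructor
  intro n hn g
  have key : ((pStep p H).map (MulAut.conj g).toMonoidHom : Subgroup G) ≤ pStep p H := by
    rw [pStep, MonoidHom.map_closure]
    refine (Subgroup.closure_le _).2 ?_
    rintro x ⟨y, (⟨h, hh, rfl⟩ | ⟨h, hh, k, rfl⟩), rfl⟩
    · refine Subgroup.subset_closure (Or.inl ⟨g * h * g⁻¹, hH.conj_mem h hh g, ?_⟩)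
      simp [conj_pow]
    · refine Subgroup.subset_closure (Or.inr ⟨g * h * g⁻¹, hH.conj_mem h hh g,
        g * k * g⁻¹, ?_⟩)
      simp only [MulAut.conj_apply, MulEquiv.coe_toMonoidHom, commutatorElement_def]
      group
  exact key ⟨n, hn, rfl⟩

/-- Lemma 2.8 (reformulated): if `R` is a normal subgroup of `S` with `R ≤ S^{(2)}` and
`R^{(2,S)} = R ∩ S^{(3)}`, then every homomorphism `φ : R → ℤ/pℤ` killing `R^{(2,S)}`
is the restriction to `R` of a homomorphism `ψ : S^{(2)} → ℤ/pℤ` killing `S^{(3)}`. -/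
theorem stmt4 (p : ℕ) (hp : p.Prime) {S : Type*} [Group S] (R : Subgroup S) [R.Normal]
    (hR : R ≤ pSeries p (⊤ : Subgroup S) 2)
    (h2 : pSeries p R 2 = R ⊓ pSeries p (⊤ : Subgroup S) 3)
    (φ : ↥R →* Multiplicative (ZMod p))
    (hφ : (pSeries p R 2).subgroupOf R ≤ φ.ker) :
    ∃ ψ : ↥(pSeries p (⊤ : Subgroup S) 2) →* Multiplicative (ZMod p),
      (pSeries p (⊤ : Subgroup S) 3).subgroupOf (pSeries p (⊤ : Subgroup S) 2) ≤ ψ.ker ∧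
      ∀ (x : S) (hx : x ∈ R) (hx2 : x ∈ pSeries p (⊤ : Subgroup S) 2),
        ψ ⟨x, hx2⟩ = φ ⟨x, hx⟩ := by
  haveI : Fact p.Prime := ⟨hp⟩
  haveI : NeZero p := ⟨hp.ne_zero⟩
  set G2 := pSeries p (⊤ : Subgroup S) 2 with hG2def
  set G3 := pSeries p (⊤ : Subgroup S) 3 with hG3def
  have hpow : ∀ a : S, a ∈ G2 → a ^ p ∈ G3 := fun a ha =>
    Subgroup.subset_closure (Or.inl ⟨a, ha, rfl⟩)
  have hcomm : ∀ a b : S, a ∈ G2 → ⁅a, b⁆ ∈ G3 :=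
    fun a b ha => Subgroup.subset_closure (Or.inr ⟨a, ha, b, rfl⟩)
  have hG2n : G2.Normal := pStep_normal p ⊤ inferInstance
  haveI hG3n : G3.Normal := pStep_normal p G2 hG2n
  set N := G3.subgroupOf G2 with hNdef
  haveI : N.Normal := Subgroup.normal_subgroupOf
  -- commutator and p-th power facts inside G2
  have hcomm' : ∀ a b : ↥G2, ⁅a, b⁆ ∈ N := by
    intro a b
    rw [hNdef, Subgroup.mem_subgroupOf]
    exact hcomm _ _ a.2
  have hpow' : ∀ a : ↥G2, a ^ p ∈ N := by
    intro a
    rw [hNdef, Subgroup.mem_subgroupOf]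
    exact hpow _ a.2
  -- pass to the abelianization, then quotient: everything uses library instances
  set A := Abelianization ↥G2 with hAdef
  set M := N.map Abelianization.of with hMdef
  set Q := A ⧸ M with hQdef
  set π : ↥G2 →* Q := (QuotientGroup.mk' M).comp Abelianization.of with hπdef
  have hcommle : commutator ↥G2 ≤ N := by
    rw [commutator_def]
    exact Subgroup.commutator_le.2 fun a _ b _ => hcomm' a b
  have hofker : (Abelianization.of : ↥G2 →* A).ker ≤ N := fun x hx =>
    hcommle ((QuotientGroup.eq_one_iff x).1 hx)
  have hπker : π.ker = N := by
    rw [hπdef, ← MonoidHom.comap_ker, QuotientGroup.ker_mk', hMdef,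
      Subgroup.comap_map_eq]
    exact sup_eq_left.2 hofker
  have hofsurj : Function.Surjective (Abelianization.of : ↥G2 →* A) := fun a =>
    QuotientGroup.mk_surjective a
  have hπsurj : Function.Surjective π := fun q => by
    obtain ⟨a, rfl⟩ := QuotientGroup.mk_surjective q
    obtain ⟨x, rfl⟩ := hofsurj a
    exact ⟨x, rfl⟩
  have hQp : ∀ q : Q, q ^ p = 1 := by
    intro q
    obtain ⟨x, rfl⟩ := hπsurj q
    rw [← map_pow]
    exact (QuotientGroup.eq_one_iff _).2
      (Subgroup.mem_map_of_mem Abelianization.of (hpow' x))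
  haveI : Module (ZMod p) (Additive Q) :=
    AddCommGroup.zmodModule (fun x =>
      Additive.toMul.injective ((toMul_nsmul p x).trans (hQp x.toMul)))
  -- the homomorphism from R to Q
  set f : ↥R →* Q := π.comp (Subgroup.inclusion hR) with hfdef
  have hfker : f.ker ≤ φ.ker := by
    intro x hx
    have h3 : (x : S) ∈ G3 := by
      have : Subgroup.inclusion hR x ∈ π.ker := hx
      rw [hπker, hNdef, Subgroup.mem_subgroupOf] at this
      exact this
    exact hφ (by rw [Subgroup.mem_subgroupOf, h2]; exact ⟨x.2, h3⟩)
  set φq : (↥R ⧸ f.ker) →* Multiplicative (ZMod p) :=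
    QuotientGroup.lift f.ker φ hfker with hφqdef
  set e := QuotientGroup.quotientKerEquivRange f with hedef
  set φ' : ↥f.range →* Multiplicative (ZMod p) := φq.comp e.symm.toMonoidHom with hφ'def
  have hφ' : ∀ r : ↥R, φ' (f.rangeRestrict r) = φ r := by
    intro r
    have h1 : e.symm (f.rangeRestrict r) = QuotientGroup.mk r := by
      apply e.injective
      rw [MulEquiv.apply_symm_apply]
      rfl
    rw [hφ'def, MonoidHom.comp_apply, MulEquiv.coe_toMonoidHom, h1]
    rfl
  -- linear algebra extension
  set W : Submodule (ZMod p) (Additive Q) :=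
    AddSubgroup.toZModSubmodule p (Subgroup.toAddSubgroup f.range) with hWdef
  have hmemW : ∀ q : Q, q ∈ f.range → Additive.ofMul q ∈ W := fun q h => h
  set F : ↥W →+ ZMod p :=
    AddMonoidHom.mk' (fun w => (φ' ⟨Additive.toMul w.val, w.2⟩).toAdd) (by
      intro a b
      change (φ' ⟨Additive.toMul ↑(a + b), (a + b).2⟩).toAdd =
        (φ' ⟨Additive.toMul ↑a, a.2⟩).toAdd + (φ' ⟨Additive.toMul ↑b, b.2⟩).toAdd
      rw [show (⟨Additive.toMul ↑(a + b), (a + b).2⟩ : ↥f.range) =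
        ⟨Additive.toMul ↑a, a.2⟩ * ⟨Additive.toMul ↑b, b.2⟩ from rfl, map_mul]
      rfl) with hFdef
  obtain ⟨g, hg⟩ := LinearMap.exists_extend (F.toZModLinearMap p)
  set ψ0 : Q →* Multiplicative (ZMod p) :=
    AddMonoidHom.toMultiplicativeRight g.toAddMonoidHom with hψ0def
  refine ⟨ψ0.comp π, ?_, ?_⟩
  · intro x hx
    have : π x = 1 := by rw [← MonoidHom.mem_ker, hπker]; exact hx
    show ψ0 (π x) = 1
    rw [this, map_one]
  · intro x hx hx2
    set r : ↥R := ⟨x, hx⟩ with hrdef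
    have hfr : π ⟨x, hx2⟩ = f r := rfl
    show ψ0 (π ⟨x, hx2⟩) = φ r
    rw [hfr]
    -- compute ψ0 (f r) via the extension property
    have hw : Additive.ofMul (f r) ∈ W := hmemW _ ⟨r, rfl⟩
    have hgw : g (Additive.ofMul (f r)) = F ⟨Additive.ofMul (f r), hw⟩ := by
      have := congrArg (fun (L : ↥W →ₗ[ZMod p] ZMod p) => L ⟨Additive.ofMul (f r), hw⟩) hg
      simpa using this
    show Multiplicative.ofAdd (g (Additive.ofMul (f r))) = φ r
    rw [hgw]
    have : (⟨Additive.toMul (Additive.ofMul (f r)), hw⟩ : ↥f.range) =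
        f.rangeRestrict r := rfl
    show Multiplicative.ofAdd ((φ' ⟨Additive.toMul (Additive.ofMul (f r)), hw⟩).toAdd) = φ r
    rw [this, hφ' r]
    rfl
end

section
/- Let p be a prime, S a topological group, and R a normal subgroup of S with R ≤ S^{(2)}. Assume that each subgroup R^{(n,S)} is closed in S and that for every neighborhood U of the identity there exists n with S^{(n)} ⊆ U. Then the following are equivalent: (A) R^{(n,S)} = R ∩ S^{(n+1)} for all n ≥ 1; (B) R^{(n,S)} ∩ S^{(n+2)} ≤ R^{(n+1,S)} for all n ≥ 1; (C) R ∩ S^{(n+1)} is contained in the subgroup generated by R^{(n,S)} and R ∩ S^{(n+2)}, for all n ≥ 1. -/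
open scoped commutatorElement

section lemmas
variable {p : ℕ} {G : Type*} [Group G] {H K : Subgroup G}

lemma pStep_le (h1 : ∀ x ∈ H, x ^ p ∈ K) (h2 : ∀ x ∈ H, ∀ g : G, ⁅x, g⁆ ∈ K) :
    pStep p H ≤ K := by
  rw [pStep, Subgroup.closure_le]
  rintro x (⟨h, hh, rfl⟩ | ⟨h, hh, g, rfl⟩)
  · exact h1 h hh
  · exact h2 h hh g

lemma pStep_mono (h : H ≤ K) : pStep p H ≤ pStep p K := by
  apply Subgroup.closure_mono
  rintro x (⟨a, ha, rfl⟩ | ⟨a, ha, g, rfl⟩)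
  · exact Or.inl ⟨a, h ha, rfl⟩
  · exact Or.inr ⟨a, h ha, g, rfl⟩

lemma pStep_le_self [hN : H.Normal] : pStep p H ≤ H := by
  refine pStep_le (fun x hx => pow_mem hx p) (fun x hx g => ?_)
  have : g * x⁻¹ * g⁻¹ ∈ H := hN.conj_mem _ (inv_mem hx) g
  have := mul_mem hx this
  simpa [commutatorElement_def, mul_assoc] using this

lemma pStep_normal_s5 [hN : H.Normal] : (pStep p H).Normal := by
  constructor
  intro x hx g
  induction hx using Subgroup.closure_induction with
  | mem y hy =>
    apply Subgroup.subset_closure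
    rcases hy with ⟨a, ha, rfl⟩ | ⟨a, ha, b, rfl⟩
    · exact Or.inl ⟨g * a * g⁻¹, hN.conj_mem a ha g, (conj_pow ..).symm⟩
    · exact Or.inr ⟨g * a * g⁻¹, hN.conj_mem a ha g, g * b * g⁻¹,
        conjugate_commutatorElement ..⟩
  | one => simpa using one_mem _
  | mul a b _ _ iha ihb =>
    have := mul_mem iha ihb
    simpa [mul_assoc] using this
  | inv a _ iha =>
    have := inv_mem iha
    simpa [mul_assoc] using this

lemma pSeries_normal [hN : H.Normal] : ∀ n, (pSeries p H n).Normal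
  | 0 => hN
  | 1 => hN
  | (n + 2) => @pStep_normal_s5 _ _ _ _ (pSeries_normal (n + 1))

lemma pSeries_succ_le [hN : H.Normal] : ∀ n, pSeries p H (n + 1) ≤ pSeries p H n
  | 0 => le_rfl
  | (n + 1) => @pStep_le_self _ _ _ _ (pSeries_normal (n + 1))

lemma pSeries_antitone [H.Normal] : Antitone (pSeries p H) :=
  antitone_nat_of_succ_le pSeries_succ_le

lemma pSeries_le_self [H.Normal] (n : ℕ) : pSeries p H n ≤ H := by
  cases n with
  | zero => exact le_rfl
  | succ n => exact pSeries_antitone (Nat.le_add_left 1 n)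
end lemmas

/-- Theorem 3.1 (Theorem `equiv`): let `S` be a topological group, `R` a normal subgroup
with `R ≤ S^{(2)}`, such that each `R^{(n,S)}` is closed and the subgroups `S^{(n)}` form a
neighborhood basis at `1` (every neighborhood of `1` contains some `S^{(n)}`).  Then the
following are equivalent:
(A) `R^{(n,S)} = R ∩ S^{(n+1)}` for all `n ≥ 1`;
(B) `R^{(n,S)} ∩ S^{(n+2)} ≤ R^{(n+1,S)}` for all `n ≥ 1` (injectivity of `ι`);
(C) `R ∩ S^{(n+1)} ≤ ⟨R^{(n,S)}, R ∩ S^{(n+2)}⟩` for all `n ≥ 1` (surjectivity of `ι`). -/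
theorem stmt5 (p : ℕ) (hp : p.Prime) {S : Type*} [Group S] [TopologicalSpace S]
    [IsTopologicalGroup S] (R : Subgroup S) [R.Normal]
    (hR : R ≤ pSeries p (⊤ : Subgroup S) 2)
    (hclosed : ∀ n : ℕ, IsClosed (pSeries p R n : Set S))
    (hbasis : ∀ U ∈ nhds (1 : S), ∃ n : ℕ, (pSeries p (⊤ : Subgroup S) n : Set S) ⊆ U) :
    List.TFAE
      [ ∀ n : ℕ, 1 ≤ n → pSeries p R n = R ⊓ pSeries p (⊤ : Subgroup S) (n + 1),
        ∀ n : ℕ, 1 ≤ n →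
          pSeries p R n ⊓ pSeries p (⊤ : Subgroup S) (n + 2) ≤ pSeries p R (n + 1),
        ∀ n : ℕ, 1 ≤ n →
          R ⊓ pSeries p (⊤ : Subgroup S) (n + 1) ≤
            pSeries p R n ⊔ (R ⊓ pSeries p (⊤ : Subgroup S) (n + 2)) ] := by
  -- R^{(n,S)} ≤ S^{(n+1)} for n ≥ 1
  have hRS : ∀ n : ℕ, 1 ≤ n → pSeries p R n ≤ pSeries p (⊤ : Subgroup S) (n + 1) := by
    intro n hn
    induction n, hn using Nat.le_induction with
    | base => exact hR
    | succ n hn ih =>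
      obtain ⟨m, rfl⟩ : ∃ m, n = m + 1 := ⟨n - 1, (Nat.succ_pred_eq_of_pos hn).symm⟩
      show pStep p (pSeries p R (m + 1)) ≤ pStep p (pSeries p (⊤ : Subgroup S) (m + 2))
      exact pStep_mono ih
  have hS_anti : Antitone (pSeries p (⊤ : Subgroup S)) := pSeries_antitone
  have hR_anti : Antitone (pSeries p R) := pSeries_antitone
  -- the easy inclusion in (A)
  have hAle : ∀ n : ℕ, 1 ≤ n → pSeries p R n ≤ R ⊓ pSeries p (⊤ : Subgroup S) (n + 1) :=
    fun n hn => le_inf (pSeries_le_self n) (hRS n hn)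
  tfae_have 1 → 2 := by
    intro a n hn x hx
    rw [Subgroup.mem_inf] at hx
    obtain ⟨hx1, hx2⟩ := hx
    rw [a n hn, Subgroup.mem_inf] at hx1
    rw [a (n + 1) (by omega), Subgroup.mem_inf]
    exact ⟨hx1.1, hx2⟩
  tfae_have 1 → 3 := by
    intro a n hn
    rw [← a n hn]
    exact le_sup_left
  tfae_have 2 → 1 := by
    intro b n hn
    induction n, hn using Nat.le_induction with
    | base => exact le_antisymm (hAle 1 le_rfl) inf_le_left
    | succ n hn ih =>
      refine le_antisymm (hAle (n + 1) (by omega)) ?_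
      intro x hx
      rw [Subgroup.mem_inf] at hx
      obtain ⟨hxR, hx2⟩ := hx
      have hx1 : x ∈ pSeries p (⊤ : Subgroup S) (n + 1) := hS_anti (by omega) hx2
      have hxn : x ∈ pSeries p R n := by
        rw [ih, Subgroup.mem_inf]; exact ⟨hxR, hx1⟩
      exact b n hn (Subgroup.mem_inf.2 ⟨hxn, hx2⟩)
  tfae_have 3 → 1 := by
    intro c n hn
    refine le_antisymm (hAle n hn) ?_
    intro x hx
    have key : ∀ k : ℕ, ∃ y, y ∈ R ⊓ pSeries p (⊤ : Subgroup S) (n + 1 + k) ∧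
        x * y⁻¹ ∈ pSeries p R n := by
      intro k
      induction k with
      | zero => exact ⟨x, hx, by simpa using one_mem _⟩
      | succ k ih =>
        obtain ⟨y, hy1, hy2⟩ := ih
        rw [show n + 1 + k = n + k + 1 from by omega] at hy1
        have hmem := c (n + k) (by omega) hy1
        haveI : (pSeries p R (n + k)).Normal := pSeries_normal _
        have hmem' : y ∈ (↑(pSeries p R (n + k) ⊔ (R ⊓ pSeries p (⊤ : Subgroup S) (n + k + 2)))
            : Set S) := hmem
        rw [Subgroup.normal_mul] at hmem'
        obtain ⟨r, hr, y', hy', h⟩ := hmem'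
        refine ⟨y', ?_, ?_⟩
        · rw [show n + 1 + (k + 1) = n + k + 2 from by omega]; exact hy'
        · have hr' : r ∈ pSeries p R n := hR_anti (Nat.le_add_right n k) hr
          have hxy : x * y'⁻¹ = x * y⁻¹ * r := by rw [← h]; group
          rw [hxy]
          exact mul_mem hy2 hr'
    have hxcl : x ∈ closure (↑(pSeries p R n) : Set S) := by
      rw [mem_closure_iff_nhds]
      intro t ht
      have hcont : Continuous fun y : S => x * y⁻¹ := continuous_const.mul continuous_inv
      have h1 : t ∈ nhds ((fun y : S => x * y⁻¹) 1) := by simpa using ht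
      have hV : (fun y : S => x * y⁻¹) ⁻¹' t ∈ nhds (1 : S) :=
        hcont.continuousAt.preimage_mem_nhds h1
      obtain ⟨m, hm⟩ := hbasis _ hV
      obtain ⟨y, hy1, hy2⟩ := key m
      rw [Subgroup.mem_inf] at hy1
      have hyS : y ∈ pSeries p (⊤ : Subgroup S) m := hS_anti (by omega) hy1.2
      exact ⟨x * y⁻¹, hm hyS, hy2⟩
    rwa [(hclosed n).closure_eq] at hxcl
  tfae_finish
end
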